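/- Let μ and μ_n (n ≥ 1) be elements of M_O. Then ∫ f dμ_n → ∫ f dμ for every f ∈ C_O if and only if ∫ f dμ_n → ∫ f dμ for every f ∈ C_O whose extension by 0 to all of S is uniformly continuous on S. -/

import Mathlib

open MeasureTheory Metric Filter Topology Set

noncomputable section

variable {S : Type*} [MetricSpace S] [MeasurableSpace S]

/-- `A` is bounded away from `C`: `A ⊆ S \ C^r` for some `r > 0`. -/
def BddAway (C A : Set S) : Prop := ∃ r > 0, ∀ x ∈ A, r ≤ infDist x C

/-- The class `C_O` of test functions: bounded, nonnegative, continuous on `O = S \ C`,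
and vanishing on `C^r` for some `r > 0` (extended by `0` to all of `S`). -/
def IsCO (C : Set S) (f : S → ℝ) : Prop :=
  ContinuousOn f Cᶜ ∧ (∀ x, 0 ≤ f x) ∧ (∃ B : ℝ, ∀ x, f x ≤ B) ∧
    ∃ r > 0, ∀ x, infDist x C < r → f x = 0

/-- The class `M_O`: Borel measures on `O = S \ C` (i.e. giving no mass to `C`)
that are finite on `S \ C^r` for each `r > 0`. -/
def MemMO (C : Set S) (μ : Measure S) : Prop :=
  μ C = 0 ∧ ∀ r : ℝ, 0 < r → μ {x | r ≤ infDist x C} < ⊤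

/-- Convergence `μ_n → μ` in `M_O`. -/
def MOTendsto (C : Set S) (μn : ℕ → Measure S) (μ : Measure S) : Prop :=
  ∀ f : S → ℝ, IsCO C f →
    Tendsto (fun n => ∫ x, f x ∂ μn n) atTop (𝓝 (∫ x, f x ∂ μ))

section Aux

variable {S : Type*} [MetricSpace S]

/-- A `C_O` function (extended by 0) is continuous on all of `S`. -/
lemma isCO_continuous {C : Set S} (hC : IsClosed C) {f : S → ℝ} (hf : IsCO C f) :
    Continuous f := by
  obtain ⟨hcont, _hpos, _hB, r, hr, hvan⟩ := hf
  rw [continuous_iff_continuousAt]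
  intro x
  by_cases hx : x ∈ C
  · have hopen : IsOpen {y : S | infDist y C < r} :=
      isOpen_lt (continuous_infDist_pt C) continuous_const
    have hxmem : x ∈ {y : S | infDist y C < r} := by
      simp only [mem_setOf_eq, infDist_zero_of_mem hx]; exact hr
    have : f =ᶠ[𝓝 x] (fun _ => (0:ℝ)) := by
      filter_upwards [hopen.mem_nhds hxmem] with y hy using hvan y hy
    exact continuousAt_const.congr this.symm
  · exact hcont.continuousAt (hC.isOpen_compl.mem_nhds hx)

variable [Nonempty S] {C : Set S} {f : S → ℝ} {B r : ℝ}

/-- Upper Lipschitz approximation. -/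
def fSup (f : S → ℝ) (k : ℕ) (x : S) : ℝ := ⨆ y, f y - (k : ℝ) * dist x y

/-- Lower Lipschitz approximation. -/
def fInf (f : S → ℝ) (k : ℕ) (x : S) : ℝ := ⨅ y, f y + (k : ℝ) * dist x y

lemma bddAbove_aux (hB : ∀ x, f x ≤ B) (k : ℕ) (x : S) :
    BddAbove (Set.range fun y => f y - (k : ℝ) * dist x y) := by
  refine ⟨B, ?_⟩
  rintro _ ⟨y, rfl⟩
  have h1 : (0:ℝ) ≤ (k : ℝ) * dist x y := by positivity
  have := hB y
  simp only [mem_setOf_eq]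
  linarith

lemma bddBelow_aux (hpos : ∀ x, 0 ≤ f x) (k : ℕ) (x : S) :
    BddBelow (Set.range fun y => f y + (k : ℝ) * dist x y) := by
  refine ⟨0, ?_⟩
  rintro _ ⟨y, rfl⟩
  have h1 : (0:ℝ) ≤ (k : ℝ) * dist x y := by positivity
  have := hpos y
  simp only [mem_setOf_eq]
  linarith

lemma le_fSup (hB : ∀ x, f x ≤ B) (k : ℕ) (x : S) : f x ≤ fSup f k x := by
  have := le_ciSup (bddAbove_aux hB k x) x
  simpa [fSup] using this

lemma fSup_le_of (k : ℕ) (x : S) {c : ℝ} (h : ∀ y, f y - (k : ℝ) * dist x y ≤ c) :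
    fSup f k x ≤ c := by unfold fSup; exact ciSup_le h

lemma fInf_le (hpos : ∀ x, 0 ≤ f x) (k : ℕ) (x : S) : fInf f k x ≤ f x := by
  have := ciInf_le (bddBelow_aux hpos k x) x
  simpa [fInf] using this

lemma le_fInf_of (k : ℕ) (x : S) {c : ℝ} (h : ∀ y, c ≤ f y + (k : ℝ) * dist x y) :
    c ≤ fInf f k x := by unfold fInf; exact le_ciInf h

lemma fSup_nonneg (hpos : ∀ x, 0 ≤ f x) (hB : ∀ x, f x ≤ B) (k : ℕ) (x : S) :
    0 ≤ fSup f k x := le_trans (hpos x) (le_fSup hB k x)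

lemma fSup_le_B (hB : ∀ x, f x ≤ B) (k : ℕ) (x : S) : fSup f k x ≤ B :=
  fSup_le_of k x fun y => by
    have h1 : (0:ℝ) ≤ (k : ℝ) * dist x y := by positivity
    linarith [hB y]

lemma fInf_nonneg (hpos : ∀ x, 0 ≤ f x) (k : ℕ) (x : S) : 0 ≤ fInf f k x :=
  le_fInf_of k x fun y => by
    have h1 : (0:ℝ) ≤ (k : ℝ) * dist x y := by positivity
    linarith [hpos y]

lemma fSup_lip_aux (hB : ∀ x, f x ≤ B) (k : ℕ) (x x' : S) :
    fSup f k x ≤ fSup f k x' + (k : ℝ) * dist x x' := by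
  refine fSup_le_of k x fun y => ?_
  have ht : dist x' y ≤ dist x' x + dist x y := dist_triangle _ _ _
  have hk : (0:ℝ) ≤ (k : ℝ) := Nat.cast_nonneg k
  have h2 : f y - (k : ℝ) * dist x' y ≤ fSup f k x' := by
    have := le_ciSup (bddAbove_aux hB k x') y
    exact this
  have hcomm : dist x' x = dist x x' := dist_comm _ _
  nlinarith

lemma fInf_lip_aux (hpos : ∀ x, 0 ≤ f x) (k : ℕ) (x x' : S) :
    fInf f k x ≤ fInf f k x' + (k : ℝ) * dist x x' := by
  have key : fInf f k x - (k : ℝ) * dist x x' ≤ fInf f k x' := by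
    unfold fInf
    refine le_ciInf fun y => ?_
    have ht : dist x y ≤ dist x x' + dist x' y := dist_triangle _ _ _
    have hk : (0:ℝ) ≤ (k : ℝ) := Nat.cast_nonneg k
    have h2 := ciInf_le (bddBelow_aux hpos k x) y
    nlinarith
  linarith

lemma fSup_uc (hB : ∀ x, f x ≤ B) (k : ℕ) : UniformContinuous (fSup f k) := by
  refine (LipschitzWith.of_dist_le_mul (K := (k : NNReal)) fun x y => ?_).uniformContinuous
  rw [Real.dist_eq, abs_sub_le_iff]
  have h1 := fSup_lip_aux hB k x y
  have h2 := fSup_lip_aux hB k y x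
  rw [dist_comm y x] at h2
  simp only [NNReal.coe_natCast]
  exact ⟨by linarith, by linarith⟩

lemma fInf_uc (hpos : ∀ x, 0 ≤ f x) (k : ℕ) : UniformContinuous (fInf f k) := by
  refine (LipschitzWith.of_dist_le_mul (K := (k : NNReal)) fun x y => ?_).uniformContinuous
  rw [Real.dist_eq, abs_sub_le_iff]
  have h1 := fInf_lip_aux hpos k x y
  have h2 := fInf_lip_aux hpos k y x
  rw [dist_comm y x] at h2
  simp only [NNReal.coe_natCast]
  exact ⟨by linarith, by linarith⟩

lemma fSup_vanish (hpos : ∀ x, 0 ≤ f x) (hB : ∀ x, f x ≤ B) (hr : 0 < r)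
    (hvan : ∀ x, infDist x C < r → f x = 0) {k : ℕ} (hk : B ≤ (k : ℝ) * (r / 2))
    (x : S) (hx : infDist x C < r / 2) : fSup f k x = 0 := by
  refine le_antisymm (fSup_le_of k x fun y => ?_) ?_
  · have hk0 : (0:ℝ) ≤ (k : ℝ) := Nat.cast_nonneg k
    by_cases hd : dist x y < r / 2
    · have hyd : infDist y C < r := by
        have := infDist_le_infDist_add_dist (x := y) (y := x) (s := C)
        rw [dist_comm y x] at this
        linarith
      have := hvan y hyd
      have h1 : (0:ℝ) ≤ (k : ℝ) * dist x y := by positivity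
      linarith
    · push_neg at hd
      have : (k : ℝ) * (r / 2) ≤ (k : ℝ) * dist x y := by
        apply mul_le_mul_of_nonneg_left hd hk0
      linarith [hB y]
  · have hfx : f x = 0 := hvan x (lt_trans hx (by linarith))
    have := le_fSup hB k x
    linarith

lemma fInf_vanish (hpos : ∀ x, 0 ≤ f x) (hvan : ∀ x, infDist x C < r → f x = 0)
    (k : ℕ) (x : S) (hx : infDist x C < r) : fInf f k x = 0 := by
  have h1 := fInf_le hpos k x
  have h2 := fInf_nonneg hpos k x
  rw [hvan x hx] at h1
  linarith

lemma fSup_tendsto (hcont : Continuous f) (hpos : ∀ x, 0 ≤ f x) (hB : ∀ x, f x ≤ B)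
    (x : S) : Tendsto (fun k => fSup f k x) atTop (𝓝 (f x)) := by
  rw [tendsto_order]
  constructor
  · intro a ha
    exact Filter.Eventually.of_forall fun k => lt_of_lt_of_le ha (le_fSup hB k x)
  · intro a ha
    set ε := (a - f x) / 2 with hε
    have hεpos : 0 < ε := by simp [hε]; linarith
    obtain ⟨δ, hδpos, hδ⟩ := Metric.continuousAt_iff.1 hcont.continuousAt ε hεpos
    filter_upwards [eventually_ge_atTop ⌈B / δ⌉₊] with k hk
    have hkδ : B ≤ (k : ℝ) * δ := by
      have h1 : B / δ ≤ (⌈B / δ⌉₊ : ℝ) := Nat.le_ceil _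
      have h2 : ((⌈B / δ⌉₊ : ℕ) : ℝ) ≤ (k : ℝ) := Nat.cast_le.2 hk
      have := (div_le_iff₀ hδpos).1 (le_trans h1 h2)
      linarith
    have : fSup f k x ≤ f x + ε := by
      refine fSup_le_of k x fun y => ?_
      by_cases hd : dist y x < δ
      · have := hδ hd
        rw [Real.dist_eq] at this
        have h1 : f y ≤ f x + ε := by
          have := abs_lt.1 this
          linarith [this.2]
        have h2 : (0:ℝ) ≤ (k : ℝ) * dist x y := by positivity
        linarith
      · push_neg at hd
        rw [dist_comm y x] at hd
        have hkd : (k : ℝ) * δ ≤ (k : ℝ) * dist x y :=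
          mul_le_mul_of_nonneg_left hd (Nat.cast_nonneg k)
        have := hB y
        have := hpos x
        linarith
    have : fSup f k x ≤ f x + ε := this
    simp only [hε] at this ⊢
    linarith

lemma fInf_tendsto (hcont : Continuous f) (hpos : ∀ x, 0 ≤ f x) (hB : ∀ x, f x ≤ B)
    (x : S) : Tendsto (fun k => fInf f k x) atTop (𝓝 (f x)) := by
  rw [tendsto_order]
  constructor
  · intro a ha
    set ε := (f x - a) / 2 with hε
    have hεpos : 0 < ε := by simp [hε]; linarith
    obtain ⟨δ, hδpos, hδ⟩ := Metric.continuousAt_iff.1 hcont.continuousAt ε hεpos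
    filter_upwards [eventually_ge_atTop ⌈B / δ⌉₊] with k hk
    have hkδ : B ≤ (k : ℝ) * δ := by
      have h1 : B / δ ≤ (⌈B / δ⌉₊ : ℝ) := Nat.le_ceil _
      have h2 : ((⌈B / δ⌉₊ : ℕ) : ℝ) ≤ (k : ℝ) := Nat.cast_le.2 hk
      have := (div_le_iff₀ hδpos).1 (le_trans h1 h2)
      linarith
    have hle : f x - ε ≤ fInf f k x := by
      refine le_fInf_of k x fun y => ?_
      by_cases hd : dist y x < δ
      · have := hδ hd
        rw [Real.dist_eq] at this
        have h1 : f x - ε ≤ f y := by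
          have := abs_lt.1 this
          linarith [this.1]
        have h2 : (0:ℝ) ≤ (k : ℝ) * dist x y := by positivity
        linarith
      · push_neg at hd
        rw [dist_comm y x] at hd
        have hkd : (k : ℝ) * δ ≤ (k : ℝ) * dist x y :=
          mul_le_mul_of_nonneg_left hd (Nat.cast_nonneg k)
        have := hB x
        have := hpos y
        linarith
    simp only [hε] at hle ⊢
    linarith
  · intro a ha
    exact Filter.Eventually.of_forall fun k => lt_of_le_of_lt (fInf_le hpos k x) ha

end Aux

section Integ

variable {S : Type*} [MetricSpace S] [MeasurableSpace S] [BorelSpace S]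

lemma integrable_of_van {C : Set S} {μ : Measure S} (hμ : MemMO C μ) {h : S → ℝ} {B s : ℝ}
    (hc : Continuous h) (h0 : ∀ x, 0 ≤ h x) (hb : ∀ x, h x ≤ B) (hs : 0 < s)
    (hv : ∀ x, infDist x C < s → h x = 0) : Integrable h μ := by
  have hFmeas : MeasurableSet {x : S | s ≤ infDist x C} :=
    (isClosed_le continuous_const (continuous_infDist_pt C)).measurableSet
  have heq : h = Set.indicator {x : S | s ≤ infDist x C} h := by
    funext x
    by_cases hx : x ∈ {x : S | s ≤ infDist x C}
    · rw [Set.indicator_of_mem hx]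
    · rw [Set.indicator_of_notMem hx, hv x (lt_of_not_ge hx)]
  rw [heq, integrable_indicator_iff hFmeas]
  refine Measure.integrableOn_of_bounded (M := B) (hμ.2 s hs).ne hc.aestronglyMeasurable ?_
  refine Filter.Eventually.of_forall fun x => ?_
  rw [Real.norm_eq_abs, abs_of_nonneg (h0 x)]
  exact hb x

end Integ

/-- Portmanteau (i) ⟺ (ii): convergence tested on all of `C_O` is equivalent to
convergence tested on those `f ∈ C_O` whose extension by `0` to `S` is uniformly
continuous on `S`. -/
theorem stmt0 [BorelSpace S] [CompleteSpace S] [TopologicalSpace.SeparableSpace S]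
    (C : Set S) (hC : IsClosed C)
    (μ : Measure S) (μn : ℕ → Measure S)
    (hμ : MemMO C μ) (hμn : ∀ n, MemMO C (μn n)) :
    (∀ f : S → ℝ, IsCO C f →
        Tendsto (fun n => ∫ x, f x ∂ μn n) atTop (𝓝 (∫ x, f x ∂ μ)))
    ↔
    (∀ f : S → ℝ, IsCO C f → UniformContinuous f →
        Tendsto (fun n => ∫ x, f x ∂ μn n) atTop (𝓝 (∫ x, f x ∂ μ))) := by
  constructor
  · exact fun H f hf _ => H f hf
  · intro H f hf
    rcases isEmpty_or_nonempty S with hS | hS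
    · have h0 : ∀ ν : Measure S, ∫ x, f x ∂ν = (0:ℝ) := fun ν => by
        rw [Measure.eq_zero_of_isEmpty ν]; exact integral_zero_measure f
      simp only [h0]
      exact tendsto_const_nhds
    · obtain ⟨hcont', hpos, ⟨B, hB⟩, r, hr, hvan⟩ := hf
      have hfc : Continuous f := isCO_continuous hC ⟨hcont', hpos, ⟨B, hB⟩, r, hr, hvan⟩
      have hB0 : 0 ≤ B := le_trans (hpos (Classical.arbitrary S)) (hB _)
      obtain ⟨K0, hK0⟩ : ∃ K0 : ℕ, B ≤ (K0 : ℝ) * (r / 2) := by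
        obtain ⟨K0, hK0⟩ := exists_nat_gt (B / (r / 2))
        refine ⟨K0, ?_⟩
        rw [div_lt_iff₀ (by linarith)] at hK0
        linarith
      have hKk : ∀ k : ℕ, B ≤ ((k + K0 : ℕ) : ℝ) * (r / 2) := by
        intro k
        have h1 : (K0 : ℝ) ≤ ((k + K0 : ℕ) : ℝ) := by exact_mod_cast Nat.le_add_left K0 k
        nlinarith
      have hsupCO : ∀ k : ℕ, IsCO C (fSup f (k + K0)) := fun k =>
        ⟨((fSup_uc hB (k + K0)).continuous).continuousOn, fSup_nonneg hpos hB _,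
          ⟨B, fSup_le_B hB _⟩, r / 2, by linarith,
          fSup_vanish hpos hB hr hvan (hKk k)⟩
      have hinfCO : ∀ k : ℕ, IsCO C (fInf f k) := fun k =>
        ⟨((fInf_uc hpos k).continuous).continuousOn, fInf_nonneg hpos k,
          ⟨B, fun x => le_trans (fInf_le hpos k x) (hB x)⟩, r, hr, fInf_vanish hpos hvan k⟩
      have Hsup : ∀ k : ℕ, Tendsto (fun n => ∫ x, fSup f (k + K0) x ∂ μn n) atTop
          (𝓝 (∫ x, fSup f (k + K0) x ∂ μ)) := fun k => H _ (hsupCO k) (fSup_uc hB _)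
      have Hinf : ∀ k : ℕ, Tendsto (fun n => ∫ x, fInf f k x ∂ μn n) atTop
          (𝓝 (∫ x, fInf f k x ∂ μ)) := fun k => H _ (hinfCO k) (fInf_uc hpos _)
      set bound : S → ℝ := Set.indicator {x : S | r / 2 ≤ infDist x C} (fun _ => B) with hbound
      have hFmeas : MeasurableSet {x : S | r / 2 ≤ infDist x C} :=
        (isClosed_le continuous_const (continuous_infDist_pt C)).measurableSet
      have hbi : Integrable bound μ := (integrable_indicator_iff hFmeas).2
        (integrableOn_const (hμ.2 _ (by linarith)).ne)
      have DCTsup : Tendsto (fun k => ∫ x, fSup f (k + K0) x ∂ μ) atTop (𝓝 (∫ x, f x ∂ μ)) := by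
        refine tendsto_integral_of_dominated_convergence bound
          (fun k => ((fSup_uc hB (k + K0)).continuous).aestronglyMeasurable) hbi
          (fun k => Filter.Eventually.of_forall fun x => ?_)
          (Filter.Eventually.of_forall fun x => ?_)
        · by_cases hx : x ∈ {x : S | r / 2 ≤ infDist x C}
          · rw [hbound, Set.indicator_of_mem hx, Real.norm_eq_abs,
              abs_of_nonneg (fSup_nonneg hpos hB _ x)]
            exact fSup_le_B hB _ x
          · rw [hbound, Set.indicator_of_notMem hx,
              fSup_vanish hpos hB hr hvan (hKk k) x (lt_of_not_ge hx)]
            simp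
        · exact (fSup_tendsto hfc hpos hB x).comp (tendsto_add_atTop_nat K0)
      have DCTinf : Tendsto (fun k => ∫ x, fInf f k x ∂ μ) atTop (𝓝 (∫ x, f x ∂ μ)) := by
        refine tendsto_integral_of_dominated_convergence bound
          (fun k => ((fInf_uc hpos k).continuous).aestronglyMeasurable) hbi
          (fun k => Filter.Eventually.of_forall fun x => ?_)
          (Filter.Eventually.of_forall fun x => ?_)
        · by_cases hx : x ∈ {x : S | r / 2 ≤ infDist x C}
          · rw [hbound, Set.indicator_of_mem hx, Real.norm_eq_abs,
              abs_of_nonneg (fInf_nonneg hpos _ x)]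
            exact le_trans (fInf_le hpos k x) (hB x)
          · rw [hbound, Set.indicator_of_notMem hx,
              fInf_vanish hpos hvan k x (lt_trans (lt_of_not_ge hx) (by linarith))]
            simp
        · exact fInf_tendsto hfc hpos hB x
      rw [Metric.tendsto_atTop]
      intro ε hε
      obtain ⟨k1, hk1⟩ := (Metric.tendsto_atTop.1 DCTsup) (ε / 2) (by linarith)
      obtain ⟨k2, hk2⟩ := (Metric.tendsto_atTop.1 DCTinf) (ε / 2) (by linarith)
      set k := max k1 k2 with hk
      have hdsup : |(∫ x, fSup f (k + K0) x ∂ μ) - ∫ x, f x ∂ μ| < ε / 2 := by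
        have := hk1 k (le_max_left _ _)
        rwa [Real.dist_eq] at this
      have hdinf : |(∫ x, fInf f k x ∂ μ) - ∫ x, f x ∂ μ| < ε / 2 := by
        have := hk2 k (le_max_right _ _)
        rwa [Real.dist_eq] at this
      obtain ⟨N1, hN1⟩ := (Metric.tendsto_atTop.1 (Hsup k)) (ε / 2) (by linarith)
      obtain ⟨N2, hN2⟩ := (Metric.tendsto_atTop.1 (Hinf k)) (ε / 2) (by linarith)
      refine ⟨max N1 N2, fun n hn => ?_⟩
      have hif : Integrable f (μn n) := integrable_of_van (hμn n) hfc hpos hB hr hvan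
      have his : Integrable (fSup f (k + K0)) (μn n) :=
        integrable_of_van (hμn n) ((fSup_uc hB _).continuous) (fSup_nonneg hpos hB _)
          (fSup_le_B hB _) (by linarith : (0:ℝ) < r / 2)
          (fSup_vanish hpos hB hr hvan (hKk k))
      have hii : Integrable (fInf f k) (μn n) :=
        integrable_of_van (hμn n) ((fInf_uc hpos _).continuous) (fInf_nonneg hpos _)
          (fun x => le_trans (fInf_le hpos k x) (hB x)) hr (fInf_vanish hpos hvan k)
      have m1 : (∫ x, f x ∂ μn n) ≤ ∫ x, fSup f (k + K0) x ∂ μn n :=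
        integral_mono hif his (fun x => le_fSup hB _ x)
      have m2 : (∫ x, fInf f k x ∂ μn n) ≤ ∫ x, f x ∂ μn n :=
        integral_mono hii hif (fun x => fInf_le hpos _ x)
      have d1 : |(∫ x, fSup f (k + K0) x ∂ μn n) - ∫ x, fSup f (k + K0) x ∂ μ| < ε / 2 := by
        have := hN1 n (le_trans (le_max_left _ _) hn)
        rwa [Real.dist_eq] at this
      have d2 : |(∫ x, fInf f k x ∂ μn n) - ∫ x, fInf f k x ∂ μ| < ε / 2 := by
        have := hN2 n (le_trans (le_max_right _ _) hn)
        rwa [Real.dist_eq] at this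
      rw [Real.dist_eq, abs_sub_lt_iff]
      have a1 := abs_lt.1 hdsup
      have a2 := abs_lt.1 hdinf
      have a3 := abs_lt.1 d1
      have a4 := abs_lt.1 d2
      constructor
      · linarith [a1.2, a3.2]
      · linarith [a2.1, a4.1]
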